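/- Let T : M_n(ℂ) → M_n(ℂ) be a bijective ℝ-linear map with ρ(T(x)) = ρ(x) for all x, and suppose T(λI) = λI for all λ ∈ ℂ. Then T preserves the peripheral spectrum: for every x, the set of eigenvalues of x of maximal modulus equals the set of eigenvalues of T(x) of maximal modulus. -/

import Mathlib

open scoped Pointwise


noncomputable def specRad (n : ℕ) (x : Matrix (Fin n) (Fin n) ℂ) : ℝ :=
  sSup ((fun z : ℂ => ‖z‖) '' spectrum ℂ x)

lemma abs_le_specRad {n : ℕ} {x : Matrix (Fin n) (Fin n) ℂ} {μ : ℂ}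
    (h : μ ∈ spectrum ℂ x) : ‖μ‖ ≤ specRad n x :=
  le_csSup (((Matrix.finite_spectrum x).image _).bddAbove) ⟨μ, h, rfl⟩

lemma spec_nonempty {n : ℕ} (hn : 0 < n) (x : Matrix (Fin n) (Fin n) ℂ) :
    (spectrum ℂ x).Nonempty := by
  haveI : Nonempty (Fin n) := Fin.pos_iff_nonempty.mp hn
  exact spectrum.nonempty_of_isAlgClosed_of_finiteDimensional ℂ x

lemma exists_specRad {n : ℕ} (hn : 0 < n) (x : Matrix (Fin n) (Fin n) ℂ) :
    ∃ μ ∈ spectrum ℂ x, ‖μ‖ = specRad n x := by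
  have hmem : sSup ((fun z : ℂ => ‖z‖) '' spectrum ℂ x) ∈ (fun z : ℂ => ‖z‖) '' spectrum ℂ x :=
    Set.Nonempty.csSup_mem ((spec_nonempty hn x).image _)
      ((Matrix.finite_spectrum x).image _)
  obtain ⟨μ, hμ, h⟩ := hmem
  exact ⟨μ, hμ, h⟩

lemma spec_smul_one {n : ℕ} (x : Matrix (Fin n) (Fin n) ℂ) (lam : ℂ) :
    spectrum ℂ (x + lam • (1 : Matrix (Fin n) (Fin n) ℂ)) = spectrum ℂ x + ({lam} : Set ℂ) := by
  rw [← Algebra.algebraMap_eq_smul_one, spectrum.add_singleton_eq]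

/-- Key complex fact: equality in the triangle inequality with equal moduli forces equality. -/
lemma eq_of_abs_add {lam ν : ℂ} (_hlam : ‖lam‖ ≠ 0)
    (hν : ‖ν‖ ≤ ‖lam‖)
    (hsum : ‖ν + lam‖ = 2 * ‖lam‖) : ν = lam := by
  have h1 : ‖ν + lam‖ ≤ ‖ν‖ + ‖lam‖ := norm_add_le _ _
  have h2 : ‖ν‖ = ‖lam‖ := by nlinarith
  have h3 : ‖ν + lam‖ = ‖ν‖ + ‖lam‖ := by
    rw [hsum, h2]; ring
  have hray : SameRay ℝ ν lam := sameRay_iff_norm_add.mpr h3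
  exact hray.eq_of_norm_eq (by simp [h2])

/-- One-sided peripheral spectrum inclusion. -/
lemma periph_subset {n : ℕ} (hn : 0 < n) (a b : Matrix (Fin n) (Fin n) ℂ)
    (h : ∀ μ : ℂ, specRad n (a + μ • 1) = specRad n (b + μ • 1))
    {lam : ℂ} (hmem : lam ∈ spectrum ℂ a) (habs : ‖lam‖ = specRad n a) :
    lam ∈ spectrum ℂ b := by
  have hr0 : specRad n a = specRad n b := by
    have := h 0; simpa using this
  set r := specRad n a with hr
  rcases eq_or_lt_of_le (norm_nonneg lam) with h0 | hpos
  · -- r = 0 case : lam = 0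
    have hlam0 : lam = 0 := by
      have := norm_eq_zero.mp h0.symm; exact this
    obtain ⟨μ, hμ, hμabs⟩ := exists_specRad hn b
    have : ‖μ‖ = 0 := by rw [hμabs, ← hr0, ← habs, ← h0]
    have : μ = 0 := norm_eq_zero.mp this
    rwa [hlam0, ← this]
  · -- r > 0 case
    have hlamr : ‖lam‖ = r := habs
    -- specRad n (a + lam • 1) = 2r
    have ha2 : specRad n (a + lam • 1) = 2 * r := by
      apply le_antisymm
      · apply csSup_le (((spec_nonempty hn _).image _))
        rintro s ⟨μ, hμ, rfl⟩
        rw [spec_smul_one, Set.add_singleton] at hμ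
        obtain ⟨ν, hν, rfl⟩ := hμ
        calc ‖ν + lam‖ ≤ ‖ν‖ + ‖lam‖ := norm_add_le _ _
          _ ≤ r + r := add_le_add (abs_le_specRad hν) (le_of_eq hlamr)
          _ = 2 * r := by ring
      · have hmem2 : lam + lam ∈ spectrum ℂ (a + lam • 1) := by
          rw [spec_smul_one, Set.add_singleton]
          exact ⟨lam, hmem, rfl⟩
        have := abs_le_specRad hmem2
        calc 2 * r = ‖lam + lam‖ := by
              rw [show lam + lam = (2 : ℂ) * lam by ring, norm_mul, hlamr]
              simp
          _ ≤ _ := this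
    have hb2 : specRad n (b + lam • 1) = 2 * r := (h lam) ▸ ha2
    obtain ⟨μ, hμ, hμabs⟩ := exists_specRad hn (b + lam • 1)
    rw [spec_smul_one, Set.add_singleton] at hμ
    obtain ⟨ν, hν, rfl⟩ := hμ
    rw [hb2] at hμabs
    have hνle : ‖ν‖ ≤ ‖lam‖ := by
      rw [hlamr, hr0]; exact abs_le_specRad hν
    have : ν = lam := eq_of_abs_add (ne_of_gt hpos) hνle
      (by rw [hμabs, hlamr])
    rwa [← this]

theorem stmt_10 (n : ℕ) (T : Matrix (Fin n) (Fin n) ℂ → Matrix (Fin n) (Fin n) ℂ)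
    (hT : IsLinearMap ℝ T) (hbij : Function.Bijective T)
    (hρ : ∀ x, specRad n (T x) = specRad n x)
    (hscal : ∀ lam : ℂ, T (lam • (1 : Matrix (Fin n) (Fin n) ℂ)) = lam • 1) :
    ∀ x : Matrix (Fin n) (Fin n) ℂ,
      {lam ∈ spectrum ℂ x | ‖lam‖ = specRad n x} =
        {lam ∈ spectrum ℂ (T x) | ‖lam‖ = specRad n (T x)} := by
  intro x
  rcases Nat.eq_zero_or_pos n with rfl | hn
  · -- n = 0 : everything is a unit, spectra are empty
    have hempty : ∀ y : Matrix (Fin 0) (Fin 0) ℂ, spectrum ℂ y = ∅ := by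
      intro y
      ext μ
      simp only [Set.mem_empty_iff_false, iff_false, spectrum.mem_iff, not_not]
      exact isUnit_of_subsingleton _
    simp [hempty]
  · have key : ∀ μ : ℂ, specRad n (x + μ • 1) = specRad n (T x + μ • 1) := by
      intro μ
      have : T (x + μ • 1) = T x + μ • 1 := by
        rw [hT.map_add, hscal]
      rw [← this, hρ]
    have hr0 : specRad n x = specRad n (T x) := by simpa using key 0
    ext lam
    simp only [Set.mem_setOf_eq]
    constructor
    · rintro ⟨hmem, habs⟩
      exact ⟨periph_subset hn x (T x) key hmem habs, by rw [← hr0]; exact habs⟩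
    · rintro ⟨hmem, habs⟩
      exact ⟨periph_subset hn (T x) x (fun μ => (key μ).symm) hmem habs,
        by rw [hr0]; exact habs⟩
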